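/- Let A, B, C, D be points of the Euclidean plane with B ≠ D, dist(A, B) = dist(A, D), dist(C, B) = dist(C, D), with A and C lying strictly on opposite sides of the line through B and D, and with the angles ∠DAB and ∠DCB lying strictly between 0 and π/2. Let A', B', C', D' be points with dist(B', D') = dist(B, D), dist(A', C') = dist(A, C), ∠D'A'B' = ∠DAB, ∠D'C'B' = ∠DCB, and with A' and C' lying strictly on opposite sides of the line through B' and D'. Then the two quadrilaterals are congruent: there is an isometric equivalence φ : ℝ² ≃ᵢ ℝ² with φ(A) = A', φ(B) = B', φ(C) = C', φ(D) = D'. -/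

import Mathlib

set_option maxHeartbeats 1000000


noncomputable section

open EuclideanGeometry Real

/-- The Euclidean plane. -/
abbrev Plane : Type := EuclideanSpace ℝ (Fin 2)

private lemma sq_eq_imp_eq {x y : ℝ} (h : x ^ 2 = y ^ 2) (hx : 0 ≤ x) (hy : 0 ≤ y) :
    x = y := by
  have h2 : (x - y) * (x + y) = 0 := by linear_combination h
  rcases mul_eq_zero.1 h2 with h3 | h3
  · linarith
  · linarith

private lemma le_of_sq_le_sq' {x y : ℝ} (h : x ^ 2 ≤ y ^ 2) (hx : 0 ≤ x) (hy : 0 ≤ y) :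
    x ≤ y := by
  have := Real.sqrt_le_sqrt h
  rwa [Real.sqrt_sq hx, Real.sqrt_sq hy] at this

/-- Median length formula. -/
private lemma dist_midpoint_sq (P B D : Plane) :
    dist P (midpoint ℝ B D) ^ 2 =
      dist B D ^ 2 / 4 + dist P B * dist P D * Real.cos (∠ B P D) := by
  have hap := EuclideanGeometry.dist_sq_add_dist_sq_eq_two_mul_dist_midpoint_sq_add_half_dist_sq
    P B D
  have hlc := EuclideanGeometry.law_cos B P D
  rw [dist_comm B P, dist_comm D P] at hlc
  have h2 : (dist B D / 2) ^ 2 = dist B D ^ 2 / 4 := by ring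
  rw [h2] at hap
  linarith

/-- A point on the line through `B` and `D` equidistant from them is the midpoint. -/
private lemma eq_midpoint_of_mem_of_dist_eq {B D p : Plane} (hBD : B ≠ D)
    (hmem : p ∈ line[ℝ, B, D]) (hdist : dist p B = dist p D) :
    p = midpoint ℝ B D := by
  rw [← vsub_vadd p B] at hmem
  obtain ⟨r, hr⟩ := vadd_left_mem_affineSpan_pair.1 hmem
  have hv : (D : Plane) -ᵥ B ≠ 0 := vsub_ne_zero.2 (Ne.symm hBD)
  have hpB : dist p B = |r| * ‖(D : Plane) -ᵥ B‖ := by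
    rw [dist_eq_norm_vsub Plane, ← hr, norm_smul, Real.norm_eq_abs]
  have hpD : dist p D = |r - 1| * ‖(D : Plane) -ᵥ B‖ := by
    have hd : p -ᵥ D = (r - 1) • ((D : Plane) -ᵥ B) := by
      have : p -ᵥ D = (p -ᵥ B) - ((D : Plane) -ᵥ B) := by
        rw [vsub_sub_vsub_cancel_right]
      rw [this, ← hr, sub_smul, one_smul]
    rw [dist_eq_norm_vsub Plane, hd, norm_smul, Real.norm_eq_abs]
  have hnorm : ‖(D : Plane) -ᵥ B‖ ≠ 0 := norm_ne_zero_iff.2 hv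
  have habs : |r| = |r - 1| := by
    rw [hpB, hpD] at hdist
    exact mul_right_cancel₀ hnorm hdist
  rcases abs_eq_abs.1 habs with h | h
  · linarith
  · have hr2 : r = 1 / 2 := by linarith
    have hmid : midpoint ℝ B D = (2⁻¹ : ℝ) • (B + D) := by
      rw [midpoint_eq_smul_add, invOf_eq_inv]
    rw [← vsub_vadd p B, ← hr, hr2, hmid]
    show (1 / 2 : ℝ) • (D - B) + B = (2⁻¹ : ℝ) • (B + D)
    module

/-- Three points on a perpendicular bisector are collinear: the third is in the affine span
of the other two. -/
private lemma mem_affineSpan_pair_of_mem_perpBisector {x y B' D' A' : Plane} (hxy : x ≠ y)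
    (hB'D' : B' ≠ D')
    (hB : B' ∈ AffineSubspace.perpBisector x y)
    (hD : D' ∈ AffineSubspace.perpBisector x y)
    (hA : A' ∈ AffineSubspace.perpBisector x y) :
    A' ∈ line[ℝ, B', D'] := by
  haveI : Fact (Module.finrank ℝ Plane = 1 + 1) := ⟨by simp [finrank_euclideanSpace_fin]⟩
  have hdir : Module.finrank ℝ (AffineSubspace.perpBisector x y).direction = 1 := by
    rw [AffineSubspace.direction_perpBisector]
    exact Submodule.finrank_orthogonal_span_singleton (vsub_ne_zero.2 (Ne.symm hxy))
  have hDB : D' -ᵥ B' ∈ (AffineSubspace.perpBisector x y).direction :=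
    AffineSubspace.vsub_mem_direction hD hB
  have hAB : A' -ᵥ B' ∈ (AffineSubspace.perpBisector x y).direction :=
    AffineSubspace.vsub_mem_direction hA hB
  have hspan : (ℝ ∙ (D' -ᵥ B')) = (AffineSubspace.perpBisector x y).direction := by
    apply Submodule.eq_of_le_of_finrank_le ((Submodule.span_singleton_le_iff_mem _ _).2 hDB)
    rw [hdir, finrank_span_singleton (vsub_ne_zero.2 (Ne.symm hB'D'))]
  rw [← hspan, Submodule.mem_span_singleton] at hAB
  obtain ⟨r, hr⟩ := hAB
  have hA' : A' = r • (D' -ᵥ B') +ᵥ B' := by rw [hr, vsub_vadd]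
  rw [hA']
  exact vadd_left_mem_affineSpan_pair.2 ⟨r, rfl⟩

/-- A quadrilateral `ABCD` in which `AC` is the perpendicular bisector of `BD`
(i.e. `|AB| = |AD|` and `|CB| = |CD|`), with `A`, `C` strictly on opposite sides of the
line `BD` and the angles `∠DAB`, `∠DCB` acute, is determined up to congruence by the four
measurements `|BD|`, `|AC|`, `∠DAB` and `∠DCB`. -/
theorem kite_four_measurements (A B C D A' B' C' D' : Plane) (hBD : B ≠ D)
    (h1 : dist A B = dist A D) (h2 : dist C B = dist C D)
    (hside : (affineSpan ℝ ({B, D} : Set Plane)).SOppSide A C)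
    (hA0 : 0 < ∠ D A B) (hA1 : ∠ D A B < π / 2)
    (hC0 : 0 < ∠ D C B) (hC1 : ∠ D C B < π / 2)
    (e1 : dist B' D' = dist B D) (e2 : dist A' C' = dist A C)
    (e3 : ∠ D' A' B' = ∠ D A B) (e4 : ∠ D' C' B' = ∠ D C B)
    (hside' : (affineSpan ℝ ({B', D'} : Set Plane)).SOppSide A' C') :
    ∃ φ : Plane ≃ᵢ Plane, φ A = A' ∧ φ B = B' ∧ φ C = C' ∧ φ D = D' := by
  classical
  -- notation
  set M : Plane := midpoint ℝ B D with hM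
  set M' : Plane := midpoint ℝ B' D' with hM'
  have hd2pos : 0 < dist B D := dist_pos.2 hBD
  have hB'D' : B' ≠ D' := by
    rw [← dist_pos, e1]; exact hd2pos
  set cosA : ℝ := Real.cos (∠ D A B) with hcosA
  set cosC : ℝ := Real.cos (∠ D C B) with hcosC
  have hcosApos : 0 < cosA := by
    apply Real.cos_pos_of_mem_Ioo
    constructor
    · linarith only [Real.pi_pos, hA0]
    · exact hA1
  have hcosCpos : 0 < cosC := by
    apply Real.cos_pos_of_mem_Ioo
    constructor
    · linarith only [Real.pi_pos, hC0]
    · exact hC1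
  have hcosAle : cosA ≤ 1 := Real.cos_le_one _
  have hcosCle : cosC ≤ 1 := Real.cos_le_one _
  -- Unprimed kite facts
  have hangA : ∠ B A D = ∠ D A B := EuclideanGeometry.angle_comm _ _ _
  have hangC : ∠ B C D = ∠ D C B := EuclideanGeometry.angle_comm _ _ _
  have kiteA : dist A M ^ 2 = dist B D ^ 2 / 4 + dist A B * dist A B * cosA := by
    have := dist_midpoint_sq A B D
    rw [hangA, ← h1] at this
    exact this
  have kiteC : dist C M ^ 2 = dist B D ^ 2 / 4 + dist C B * dist C B * cosC := by
    have := dist_midpoint_sq C B D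
    rw [hangC, ← h2] at this
    exact this
  have lawA : dist B D ^ 2 = 2 * dist A B ^ 2 * (1 - cosA) := by
    have hlc := EuclideanGeometry.law_cos B A D
    rw [hangA, dist_comm B A, dist_comm D A, ← h1] at hlc
    linarith only [hlc]
  have lawC : dist B D ^ 2 = 2 * dist C B ^ 2 * (1 - cosC) := by
    have hlc := EuclideanGeometry.law_cos B C D
    rw [hangC, dist_comm B C, dist_comm D C, ← h2] at hlc
    linarith only [hlc]
  have h1cosA : 0 < 1 - cosA := by nlinarith only [lawA, hd2pos, hcosAle, sq_nonneg (dist A B)]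
  have h1cosC : 0 < 1 - cosC := by nlinarith only [lawC, hd2pos, hcosCle, sq_nonneg (dist C B)]
  -- M lies between A and C
  obtain ⟨p, hp, hw⟩ := AffineSubspace.wOppSide_iff_exists_wbtw.1 hside.1
  have hw2 := hw
  obtain ⟨t, _, hpt⟩ := hw2
  have hpperp : p ∈ AffineSubspace.perpBisector B D := by
    rw [← hpt]
    exact AffineMap.lineMap_mem t
      (AffineSubspace.mem_perpBisector_iff_dist_eq.2 h1)
      (AffineSubspace.mem_perpBisector_iff_dist_eq.2 h2)
  have hpM : p = M :=
    eq_midpoint_of_mem_of_dist_eq hBD hp (AffineSubspace.mem_perpBisector_iff_dist_eq.1 hpperp)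
  have hsum : dist A M + dist M C = dist A C := dist_add_dist_eq_iff.2 (hpM ▸ hw)
  -- Primed facts
  have hangA' : ∠ B' A' D' = ∠ D A B := by
    rw [EuclideanGeometry.angle_comm, e3]
  have hangC' : ∠ B' C' D' = ∠ D C B := by
    rw [EuclideanGeometry.angle_comm, e4]
  have kiteA' : dist A' M' ^ 2 = dist B D ^ 2 / 4 + dist A' B' * dist A' D' * cosA := by
    have := dist_midpoint_sq A' B' D'
    rw [hangA', e1] at this
    exact this
  have kiteC' : dist C' M' ^ 2 = dist B D ^ 2 / 4 + dist C' B' * dist C' D' * cosC := by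
    have := dist_midpoint_sq C' B' D'
    rw [hangC', e1] at this
    exact this
  have lawA' : dist B D ^ 2 =
      dist A' B' ^ 2 + dist A' D' ^ 2 - 2 * (dist A' B' * dist A' D') * cosA := by
    have hlc := EuclideanGeometry.law_cos B' A' D'
    rw [hangA', dist_comm B' A', dist_comm D' A', e1] at hlc
    linarith only [hlc]
  have lawC' : dist B D ^ 2 =
      dist C' B' ^ 2 + dist C' D' ^ 2 - 2 * (dist C' B' * dist C' D') * cosC := by
    have hlc := EuclideanGeometry.law_cos B' C' D'
    rw [hangC', dist_comm B' C', dist_comm D' C', e1] at hlc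
    linarith only [hlc]
  -- product bounds
  have prodA : dist A' B' * dist A' D' ≤ dist A B * dist A B := by
    nlinarith only [sq_nonneg (dist A' B' - dist A' D'), lawA, lawA', h1cosA]
  have prodC : dist C' B' * dist C' D' ≤ dist C B * dist C B := by
    nlinarith only [sq_nonneg (dist C' B' - dist C' D'), lawC, lawC', h1cosC]
  have hleA : dist A' M' ≤ dist A M := by
    apply le_of_sq_le_sq' _ dist_nonneg dist_nonneg
    rw [kiteA, kiteA']
    have hmul := mul_le_mul_of_nonneg_right prodA hcosApos.le
    linarith only [hmul]
  have hleC : dist C' M' ≤ dist C M := by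
    apply le_of_sq_le_sq' _ dist_nonneg dist_nonneg
    rw [kiteC, kiteC']
    have hmul := mul_le_mul_of_nonneg_right prodC hcosCpos.le
    linarith only [hmul]
  have tri : dist A' C' ≤ dist A' M' + dist M' C' := dist_triangle _ _ _
  have hMC' : dist M' C' = dist C' M' := dist_comm _ _
  have eqA : dist A' M' = dist A M := by
    apply le_antisymm hleA
    have : dist M C = dist C M := dist_comm _ _
    rw [e2] at tri
    linarith only [tri, hsum, hleC, hMC', this]
  have eqC : dist C' M' = dist C M := by
    apply le_antisymm hleC
    have : dist M C = dist C M := dist_comm _ _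
    rw [e2] at tri
    linarith only [tri, hsum, hleA, hMC', this]
  -- extract side equalities
  have hprodA : dist A' B' * dist A' D' = dist A B * dist A B := by
    have hsq : dist A' M' ^ 2 = dist A M ^ 2 := by rw [eqA]
    rw [kiteA, kiteA'] at hsq
    have := mul_right_cancel₀ (ne_of_gt hcosApos)
      (by linarith only [hsq] : dist A' B' * dist A' D' * cosA
        = dist A B * dist A B * cosA)
    exact this
  have hprodC : dist C' B' * dist C' D' = dist C B * dist C B := by
    have hsq : dist C' M' ^ 2 = dist C M ^ 2 := by rw [eqC]
    rw [kiteC, kiteC'] at hsq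
    have := mul_right_cancel₀ (ne_of_gt hcosCpos)
      (by linarith only [hsq] : dist C' B' * dist C' D' * cosC
        = dist C B * dist C B * cosC)
    exact this
  have hAeq : dist A' B' = dist A' D' := by
    have h8 : (dist A' B' - dist A' D') ^ 2 = 0 := by
      have hx : dist A' B' * dist A' D' * cosA = dist A B * dist A B * cosA := by
        rw [hprodA]
      linarith only [lawA', lawA, hprodA, hx]
    have := pow_eq_zero_iff (n := 2) (by norm_num) |>.1 h8
    exact sub_eq_zero.1 this
  have hCeq : dist C' B' = dist C' D' := by
    have h8 : (dist C' B' - dist C' D') ^ 2 = 0 := by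
      have hx : dist C' B' * dist C' D' * cosC = dist C B * dist C B * cosC := by
        rw [hprodC]
      linarith only [lawC', lawC, hprodC, hx]
    have := pow_eq_zero_iff (n := 2) (by norm_num) |>.1 h8
    exact sub_eq_zero.1 this
  have hAB' : dist A' B' = dist A B := by
    apply sq_eq_imp_eq _ dist_nonneg dist_nonneg
    have hsq : dist A' B' * dist A' B' = dist A B * dist A B := by
      rw [← hprodA, ← hAeq]
    linarith only [hsq]
  have hAD' : dist A' D' = dist A D := by rw [← hAeq, hAB', h1]
  have hCB' : dist C' B' = dist C B := by
    apply sq_eq_imp_eq _ dist_nonneg dist_nonneg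
    have hsq : dist C' B' * dist C' B' = dist C B * dist C B := by
      rw [← hprodC, ← hCeq]
    linarith only [hsq]
  have hCD' : dist C' D' = dist C D := by rw [← hCeq, hCB', h2]
  -- Construction of the isometry
  haveI hrank2 : Fact (Module.finrank ℝ Plane = 2) := ⟨finrank_euclideanSpace_fin⟩
  let o : Orientation ℝ Plane (Fin 2) := (EuclideanSpace.basisFun (Fin 2) ℝ).toBasis.orientation
  have hv' : ‖(D' : Plane) -ᵥ B'‖ = ‖(D : Plane) -ᵥ B‖ := by
    rw [← dist_eq_norm_vsub Plane, ← dist_eq_norm_vsub Plane, dist_comm D' B', dist_comm D B, e1]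
  set rot := o.rotation (o.oangle ((D : Plane) -ᵥ B) ((D' : Plane) -ᵥ B')) with hrotdef
  have hrot : rot ((D : Plane) -ᵥ B) = (D' : Plane) -ᵥ B' :=
    (o.rotation_oangle_eq_iff_norm_eq _ _).2 hv'.symm
  let ψ : Plane ≃ᵃⁱ[ℝ] Plane :=
    ((AffineIsometryEquiv.vaddConst ℝ B).symm.trans rot.toAffineIsometryEquiv).trans
      (AffineIsometryEquiv.vaddConst ℝ B')
  have hψ : ∀ x : Plane, ψ x = rot (x -ᵥ B) +ᵥ B' := fun x => rfl
  have hψB : ψ B = B' := by rw [hψ]; simp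
  have hψD : ψ D = D' := by rw [hψ, hrot, vsub_vadd]
  -- reflection across line B'D'
  haveI : Nonempty (affineSpan ℝ ({B', D'} : Set Plane)) :=
    ⟨⟨B', left_mem_affineSpan_pair ℝ B' D'⟩⟩
  set s' := affineSpan ℝ ({B', D'} : Set Plane) with hs'
  set ρ := EuclideanGeometry.reflection s' with hρ
  have hB'mem : B' ∈ s' := left_mem_affineSpan_pair ℝ B' D'
  have hD'mem : D' ∈ s' := right_mem_affineSpan_pair ℝ B' D'
  have hA'notin : A' ∉ s' := hside'.2.1
  have hC'notin : C' ∉ s' := hside'.2.2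
  have hArefl_ne : A' ≠ ρ A' := by
    intro h
    exact hA'notin ((EuclideanGeometry.reflection_eq_self_iff A').1 h.symm)
  have hCrefl_ne : C' ≠ ρ C' := by
    intro h
    exact hC'notin ((EuclideanGeometry.reflection_eq_self_iff C').1 h.symm)
  have hfr : Module.finrank ℝ Plane = 2 := finrank_euclideanSpace_fin
  -- ψ A is A' or its mirror image
  have hcaseA : ψ A = A' ∨ ψ A = ρ A' := by
    apply EuclideanGeometry.eq_of_dist_eq_of_dist_eq_of_finrank_eq_two hfr hB'D' hArefl_ne
      (r₁ := dist A' B') (r₂ := dist A' D') rfl _ _ rfl _ _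
    · rw [dist_comm (ρ A') B', EuclideanGeometry.dist_reflection_eq_of_mem s' hB'mem A',
        dist_comm B' A']
    · calc dist (ψ A) B' = dist (ψ A) (ψ B) := by rw [hψB]
        _ = dist A B := ψ.dist_map A B
        _ = dist A' B' := hAB'.symm
    · rw [dist_comm (ρ A') D', EuclideanGeometry.dist_reflection_eq_of_mem s' hD'mem A',
        dist_comm D' A']
    · calc dist (ψ A) D' = dist (ψ A) (ψ D) := by rw [hψD]
        _ = dist A D := ψ.dist_map A D
        _ = dist A' D' := by rw [hAD']
  obtain ⟨φ₀, hfA, hfB, hfD⟩ : ∃ φ₀ : Plane ≃ᵃⁱ[ℝ] Plane,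
      φ₀ A = A' ∧ φ₀ B = B' ∧ φ₀ D = D' := by
    rcases hcaseA with h | h
    · exact ⟨ψ, h, hψB, hψD⟩
    · refine ⟨ψ.trans ρ, ?_, ?_, ?_⟩
      · show ρ (ψ A) = A'
        rw [h, hρ, EuclideanGeometry.reflection_reflection]
      · show ρ (ψ B) = B'
        rw [hψB, hρ, (EuclideanGeometry.reflection_eq_self_iff B').2 hB'mem]
      · show ρ (ψ D) = D'
        rw [hψD, hρ, (EuclideanGeometry.reflection_eq_self_iff D').2 hD'mem]
  -- now φ₀ C is C' or its mirror image
  have hcaseC : φ₀ C = C' ∨ φ₀ C = ρ C' := by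
    apply EuclideanGeometry.eq_of_dist_eq_of_dist_eq_of_finrank_eq_two hfr hB'D' hCrefl_ne
      (r₁ := dist C' B') (r₂ := dist C' D') rfl _ _ rfl _ _
    · rw [dist_comm (ρ C') B', EuclideanGeometry.dist_reflection_eq_of_mem s' hB'mem C',
        dist_comm B' C']
    · calc dist (φ₀ C) B' = dist (φ₀ C) (φ₀ B) := by rw [hfB]
        _ = dist C B := φ₀.dist_map C B
        _ = dist C' B' := hCB'.symm
    · rw [dist_comm (ρ C') D', EuclideanGeometry.dist_reflection_eq_of_mem s' hD'mem C',
        dist_comm D' C']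
    · calc dist (φ₀ C) D' = dist (φ₀ C) (φ₀ D) := by rw [hfD]
        _ = dist C D := φ₀.dist_map C D
        _ = dist C' D' := by rw [hCD']
  have hfC : φ₀ C = C' := by
    rcases hcaseC with h | h
    · exact h
    · exfalso
      -- then A' would be equidistant from C' and its mirror image, so A' would be on
      -- the line B'D', contradiction
      have hdist : dist A' C' = dist A' (ρ C') := by
        calc dist A' C' = dist A C := e2
          _ = dist (φ₀ A) (φ₀ C) := (φ₀.dist_map A C).symm
          _ = dist A' (ρ C') := by rw [hfA, h]
      have hAperp : A' ∈ AffineSubspace.perpBisector C' (ρ C') :=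
        AffineSubspace.mem_perpBisector_iff_dist_eq.2 hdist
      have hBperp : B' ∈ AffineSubspace.perpBisector C' (ρ C') := by
        apply AffineSubspace.mem_perpBisector_iff_dist_eq.2
        rw [EuclideanGeometry.dist_reflection_eq_of_mem s' hB'mem C']
      have hDperp : D' ∈ AffineSubspace.perpBisector C' (ρ C') := by
        apply AffineSubspace.mem_perpBisector_iff_dist_eq.2
        rw [EuclideanGeometry.dist_reflection_eq_of_mem s' hD'mem C']
      exact hA'notin
        (mem_affineSpan_pair_of_mem_perpBisector hCrefl_ne hB'D' hBperp hDperp hAperp)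
  exact ⟨φ₀.toIsometryEquiv, hfA, hfB, hfC, hfD⟩
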